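/- Let E be a real inner product space, let r_t : E → ℝ (for integers t, with r_s ≡ 0 for s ≤ 0) be differentiable functions, let w ≥ 1, T ≥ 1 be integers, δ ≥ 0, M ≥ 0, and let m(·; t) : E → E for t ∈ {1,…,T} be gradient generators. Define u_{w,t}(θ) = (1/w) · Σ_{i=0}^{w-1} r_{t-i}(θ) and m̄(θ; t) = (1/w) · (m(θ; t) + Σ_{i=1}^{w-1} ∇r_{t-i}(θ)). Suppose ‖∇r_t(θ)‖ ≤ M and ‖m(θ; t)‖ ≤ M for all θ ∈ E and t ∈ {1,…,T}, and suppose θ_1,…,θ_T ∈ E satisfy ‖m̄(θ_t; t)‖ ≤ δ for every t ∈ {1,…,T}. Then (1/T) · Σ_{t=1}^T ‖∇u_{w,t}(θ_t)‖² ≤ 2δ² + 8M²/w². -/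

import Mathlib

/-- Worst-case corollary of **Theorem 1**: with bounded gradients and bounded
gradient generators, Meta Gradient Descent achieves `R_w(T) ≤ 2δ² + 8M²/w²`. -/
theorem meta_gradient_descent_regret_minimax
    {E : Type*} [NormedAddCommGroup E] [InnerProductSpace ℝ E] [CompleteSpace E]
    (r : ℤ → E → ℝ) (hrdiff : ∀ t : ℤ, Differentiable ℝ (r t))
    (hr0 : ∀ s : ℤ, s ≤ 0 → r s = 0)
    (w T : ℕ) (hw : 1 ≤ w) (hT : 1 ≤ T)
    (δ : ℝ) (hδ : 0 ≤ δ) (M : ℝ) (hM : 0 ≤ M)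
    (m : ℤ → E → E)
    (hgrad : ∀ t ∈ Finset.Icc (1 : ℤ) (T : ℤ), ∀ θ : E, ‖gradient (r t) θ‖ ≤ M)
    (hm : ∀ t ∈ Finset.Icc (1 : ℤ) (T : ℤ), ∀ θ : E, ‖m t θ‖ ≤ M)
    (u : ℤ → E → ℝ)
    (hu : ∀ (t : ℤ) (θ : E),
      u t θ = (1 / (w : ℝ)) * ∑ i ∈ Finset.range w, r (t - i) θ)
    (mbar : ℤ → E → E)
    (hmbar : ∀ (t : ℤ) (θ : E),
      mbar t θ = (1 / (w : ℝ)) •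
        (m t θ + ∑ i ∈ Finset.Icc 1 (w - 1), gradient (r (t - i)) θ))
    (θ : ℤ → E)
    (hterm : ∀ t ∈ Finset.Icc (1 : ℤ) (T : ℤ), ‖mbar t (θ t)‖ ≤ δ) :
    (1 / (T : ℝ)) * ∑ t ∈ Finset.Icc (1 : ℤ) (T : ℤ), ‖gradient (u t) (θ t)‖ ^ 2
      ≤ 2 * δ ^ 2 + 8 * M ^ 2 / (w : ℝ) ^ 2 := by
  have hw0 : (0 : ℝ) < (w : ℝ) := by exact_mod_cast hw
  have hT0 : (0 : ℝ) < (T : ℝ) := by exact_mod_cast hT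
  set B : ℝ := 2 * δ ^ 2 + 8 * M ^ 2 / (w : ℝ) ^ 2 with hB
  -- pointwise bound on each term
  have key : ∀ t ∈ Finset.Icc (1 : ℤ) (T : ℤ), ‖gradient (u t) (θ t)‖ ^ 2 ≤ B := by
    intro t ht
    -- gradient of the smoothed loss
    have hgu : gradient (u t) (θ t)
        = (1 / (w : ℝ)) • ∑ i ∈ Finset.range w, gradient (r (t - i)) (θ t) := by
      have hue : u t = fun x => (1 / (w : ℝ)) * ∑ i ∈ Finset.range w, r (t - i) x :=
        funext (hu t)
      rw [hue]
      have H : HasFDerivAt (fun y => (1 / (w : ℝ)) * ∑ i ∈ Finset.range w, r (t - i) y)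
          ((1 / (w : ℝ)) • ∑ i ∈ Finset.range w, fderiv ℝ (r (t - i)) (θ t)) (θ t) :=
        HasFDerivAt.const_mul
          (HasFDerivAt.fun_sum (u := Finset.range w)
            (fun i _ => ((hrdiff (t - i)) (θ t)).hasFDerivAt)) (1 / (w : ℝ))
      unfold gradient
      rw [H.fderiv, map_smul, map_sum]
    -- split off the i = 0 term
    have hsplit : Finset.range w = insert 0 (Finset.Icc 1 (w - 1)) := by
      ext i; simp only [Finset.mem_range, Finset.mem_insert, Finset.mem_Icc]; omega
    have h0 : (0 : ℕ) ∉ Finset.Icc 1 (w - 1) := by simp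
    have hgu' : gradient (u t) (θ t)
        = (1 / (w : ℝ)) • (gradient (r t) (θ t)
            + ∑ i ∈ Finset.Icc 1 (w - 1), gradient (r (t - i)) (θ t)) := by
      rw [hgu, hsplit, Finset.sum_insert h0]
      norm_num
    -- difference with the smoothed generator
    have hdiff : gradient (u t) (θ t) - mbar t (θ t)
        = (1 / (w : ℝ)) • (gradient (r t) (θ t) - m t (θ t)) := by
      rw [hgu', hmbar, ← smul_sub]
      congr 1
      abel
    have hnd : ‖gradient (u t) (θ t) - mbar t (θ t)‖ ≤ 2 * M / (w : ℝ) := by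
      rw [hdiff, norm_smul]
      have h1 : ‖gradient (r t) (θ t) - m t (θ t)‖ ≤ 2 * M := by
        calc ‖gradient (r t) (θ t) - m t (θ t)‖
            ≤ ‖gradient (r t) (θ t)‖ + ‖m t (θ t)‖ := norm_sub_le _ _
          _ ≤ M + M := add_le_add (hgrad t ht (θ t)) (hm t ht (θ t))
          _ = 2 * M := by ring
      have h2 : ‖(1 / (w : ℝ))‖ = 1 / (w : ℝ) := by
        rw [Real.norm_eq_abs, abs_of_pos (by positivity)]
      rw [h2]
      calc (1 / (w : ℝ)) * ‖gradient (r t) (θ t) - m t (θ t)‖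
          ≤ (1 / (w : ℝ)) * (2 * M) :=
            mul_le_mul_of_nonneg_left h1 (by positivity)
        _ = 2 * M / (w : ℝ) := by ring
    have hnu : ‖gradient (u t) (θ t)‖ ≤ δ + 2 * M / (w : ℝ) := by
      have heq : mbar t (θ t) + (gradient (u t) (θ t) - mbar t (θ t))
          = gradient (u t) (θ t) := by abel
      calc ‖gradient (u t) (θ t)‖
          = ‖mbar t (θ t) + (gradient (u t) (θ t) - mbar t (θ t))‖ := by rw [heq]
        _ ≤ ‖mbar t (θ t)‖ + ‖gradient (u t) (θ t) - mbar t (θ t)‖ := norm_add_le _ _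
        _ ≤ δ + 2 * M / (w : ℝ) := add_le_add (hterm t ht) hnd
    have hn0 : (0 : ℝ) ≤ ‖gradient (u t) (θ t)‖ := norm_nonneg _
    have hsq : ‖gradient (u t) (θ t)‖ ^ 2 ≤ (δ + 2 * M / (w : ℝ)) ^ 2 :=
      pow_le_pow_left₀ hn0 hnu 2
    have hid : 2 * δ ^ 2 + 8 * M ^ 2 / (w : ℝ) ^ 2 - (δ + 2 * M / (w : ℝ)) ^ 2
        = (δ - 2 * M / (w : ℝ)) ^ 2 := by
      field_simp
      ring
    rw [hB]
    linarith [hsq, hid, sq_nonneg (δ - 2 * M / (w : ℝ))]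
  -- sum the bound
  have hcard : (Finset.Icc (1 : ℤ) (T : ℤ)).card = T := by
    rw [Int.card_Icc]
    omega
  have hsum : ∑ t ∈ Finset.Icc (1 : ℤ) (T : ℤ), ‖gradient (u t) (θ t)‖ ^ 2
      ≤ (T : ℝ) * B := by
    calc ∑ t ∈ Finset.Icc (1 : ℤ) (T : ℤ), ‖gradient (u t) (θ t)‖ ^ 2
        ≤ ∑ _t ∈ Finset.Icc (1 : ℤ) (T : ℤ), B := Finset.sum_le_sum key
      _ = (T : ℝ) * B := by rw [Finset.sum_const, hcard, nsmul_eq_mul]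
  calc (1 / (T : ℝ)) * ∑ t ∈ Finset.Icc (1 : ℤ) (T : ℤ), ‖gradient (u t) (θ t)‖ ^ 2
      ≤ (1 / (T : ℝ)) * ((T : ℝ) * B) :=
        mul_le_mul_of_nonneg_left hsum (by positivity)
    _ = B := by field_simp
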